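/- Let A be a finite set of non-negative integers with 0 ∈ A, gcd(A) = 1, and b := max A (so b ≥ 1). Let 0 ≤ a < b and suppose (g,k) is the virtual generator of S_a. Then every element (n,h) of ((g,k) + Λ⁺) \ S_a satisfies h ≤ 2b − 5 (as an inequality of integers; in particular this set is empty when b ≤ 2). -/
import Mathlib


open Pointwise

/-- The `h`-fold sumset `hA` of a finite set of naturals:
`0A = {0}` and `(n+1)A = A + nA`. -/
def iterFin (A : Finset ℕ) : ℕ → Finset ℕ
  | 0 => {0}
  | n + 1 => A + iterFin A n

/-- The cone over `A`: pairs `(n, h)` with `n ∈ hA`. -/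
def coneNat (A : Finset ℕ) : Set (ℕ × ℕ) := {p | p.1 ∈ iterFin A p.2}

/-- `Λ⁺ = {(bn, m+n) : m, n ∈ ℕ}`. -/
def lambdaPlus (b : ℕ) : Set (ℕ × ℕ) := {q | ∃ m n : ℕ, q = (b * n, m + n)}

/-- The residue class `S_a`: elements of the cone whose first coordinate is `≡ a (mod b)`. -/
def resClass (A : Finset ℕ) (b a : ℕ) : Set (ℕ × ℕ) := {p ∈ coneNat A | p.1 % b = a}

lemma mem_iterFin_iff (B : Finset ℕ) (h N : ℕ) :
    N ∈ iterFin B h ↔ ∃ l : List ℕ, l.length = h ∧ (∀ x ∈ l, x ∈ B) ∧ l.sum = N := by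
  induction h generalizing N with
  | zero =>
    constructor
    · intro hN
      refine ⟨[], rfl, by simp, ?_⟩
      simpa [iterFin, eq_comm] using hN
    · rintro ⟨l, hl, -, hs⟩
      rw [List.length_eq_zero_iff] at hl
      subst hl
      simpa [iterFin] using hs.symm
  | succ n ih =>
    constructor
    · intro hN
      rw [iterFin, Finset.mem_add] at hN
      obtain ⟨y, hy, z, hz, hyz⟩ := hN
      obtain ⟨l, hl1, hl2, hl3⟩ := (ih z).1 hz
      refine ⟨y :: l, by simp [hl1], ?_, by simp [hl3, hyz]⟩
      intro x hx
      rcases List.mem_cons.1 hx with hh | hh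
      · exact hh ▸ hy
      · exact hl2 x hh
    · rintro ⟨l, hl1, hl2, hl3⟩
      match l with
      | [] => simp at hl1
      | x :: xs =>
        rw [iterFin, Finset.mem_add]
        exact ⟨x, hl2 x (by simp), xs.sum, (ih _).2 ⟨xs, by simpa using hl1,
          fun y hy => hl2 y (by simp [hy]), rfl⟩, by simpa using hl3⟩

lemma iterFin_mono (B : Finset ℕ) (h0 : 0 ∈ B) {h h' : ℕ} (hh : h ≤ h') :
    iterFin B h ⊆ iterFin B h' := by
  intro N hN
  obtain ⟨l, hl1, hl2, hl3⟩ := (mem_iterFin_iff B h N).1 hN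
  refine (mem_iterFin_iff B h' N).2 ⟨l ++ List.replicate (h' - h) 0, by simp [hl1]; omega, ?_, by simp [hl3]⟩
  intro x hx
  rcases List.mem_append.1 hx with hx | hx
  · exact hl2 x hx
  · rw [List.eq_of_mem_replicate hx]; exact h0

lemma iterFin_subset {S T : Finset ℕ} (hST : S ⊆ T) (h : ℕ) :
    iterFin S h ⊆ iterFin T h := by
  intro N hN
  obtain ⟨l, h1, h2, h3⟩ := (mem_iterFin_iff S h N).1 hN
  exact (mem_iterFin_iff T h N).2 ⟨l, h1, fun x hx => hST (h2 x hx), h3⟩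

lemma le_of_mem_iterFin {B : Finset ℕ} {b : ℕ} (hub : ∀ x ∈ B, x ≤ b) {h N : ℕ}
    (hN : N ∈ iterFin B h) : N ≤ h * b := by
  obtain ⟨l, h1, h2, h3⟩ := (mem_iterFin_iff B h N).1 hN
  calc N = l.sum := h3.symm
  _ ≤ l.length • b := List.sum_le_card_nsmul l b fun x hx => hub x (h2 x hx)
  _ = h * b := by simp [h1]

lemma length_le_sum {l : List ℕ} (h : ∀ x ∈ l, 1 ≤ x) : l.length ≤ l.sum := by
  induction l with
  | nil => simp
  | cons x xs ih =>
    simp only [List.length_cons, List.sum_cons]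
    have h1 := ih (fun y hy => h y (by simp [hy]))
    have h2 := h x (by simp)
    omega

lemma map_sub_sum {b : ℕ} (l : List ℕ) (hub : ∀ x ∈ l, x ≤ b) :
    (l.map (fun x => b - x)).sum + l.sum = l.length * b := by
  induction l with
  | nil => simp
  | cons x xs ih =>
    have hx : x ≤ b := hub x (by simp)
    have h1 := ih (fun y hy => hub y (by simp [hy]))
    simp only [List.map_cons, List.sum_cons, List.length_cons]
    have h2 : (xs.length + 1) * b = xs.length * b + b := by ring
    omega

lemma reflect_mem {A : Finset ℕ} {b : ℕ} (hub : ∀ x ∈ A, x ≤ b) {h N : ℕ}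
    (hN : N ∈ iterFin A h) :
    h * b - N ∈ iterFin (A.image (fun x => b - x)) h := by
  obtain ⟨l, h1, h2, h3⟩ := (mem_iterFin_iff A h N).1 hN
  refine (mem_iterFin_iff _ h _).2 ⟨l.map (fun x => b - x), by simp [h1], ?_, ?_⟩
  · intro x hx
    obtain ⟨y, hy, rfl⟩ := List.mem_map.1 hx
    exact Finset.mem_image.2 ⟨y, h2 y hy, rfl⟩
  · have key := map_sub_sum l (fun x hx => hub x (h2 x hx))
    rw [h1, h3] at key
    exact Nat.eq_sub_of_add_eq key

lemma reflect_iff (A : Finset ℕ) {b : ℕ} (hub : ∀ x ∈ A, x ≤ b) {h N : ℕ} (hN : N ≤ h * b) :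
    N ∈ iterFin A h ↔ h * b - N ∈ iterFin (A.image (fun x => b - x)) h := by
  constructor
  · exact reflect_mem hub
  · intro hm
    have hubB : ∀ x ∈ A.image (fun x => b - x), x ≤ b := by
      intro x hx; obtain ⟨y, hy, rfl⟩ := Finset.mem_image.1 hx; omega
    have hmm := reflect_mem hubB hm
    rw [Nat.sub_sub_self hN] at hmm
    refine iterFin_subset ?_ h hmm
    intro x hx
    obtain ⟨y, hy, rfl⟩ := Finset.mem_image.1 hx
    obtain ⟨z, hz, rfl⟩ := Finset.mem_image.1 hy
    rw [Nat.sub_sub_self (hub z hz)]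
    exact hz

lemma core_swap {b : ℕ} (hb : 1 ≤ b) (l : List ℕ) (h1 : ∀ x ∈ l, 1 ≤ x)
    (h2 : ∀ x ∈ l, x ≤ b - 1) (hlen : b ≤ l.length) :
    ∃ l' : List ℕ, l'.length < l.length ∧ l'.sum = l.sum ∧ ∀ x ∈ l', x ∈ l ∨ x = b := by
  have hmap : ∀ i ∈ Finset.range (b + 1), (l.take i).sum % b ∈ Finset.range b :=
    fun i _ => Finset.mem_range.2 (Nat.mod_lt _ hb)
  obtain ⟨i, hi, j, hj, hij, heq⟩ :=
    Finset.exists_ne_map_eq_of_card_lt_of_maps_to (by simp) hmap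
  wlog hlt : i < j generalizing i j
  · exact this j hj i hi hij.symm heq.symm (by omega)
  have hjb : j ≤ b := Nat.lt_succ_iff.1 (Finset.mem_range.1 hj)
  set mid := (l.drop i).take (j - i) with hmid
  have htake : l.take j = l.take i ++ mid := by
    rw [hmid, ← List.take_add]
    congr 1
    omega
  have hsum : (l.take i).sum + mid.sum = (l.take j).sum := by
    rw [htake, List.sum_append]
  have hmemmid : ∀ x ∈ mid, x ∈ l := fun x hx =>
    List.mem_of_mem_drop (List.mem_of_mem_take hx)
  have hlenmid : mid.length = j - i := by
    rw [hmid, List.length_take, List.length_drop]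
    omega
  have hdvd : b ∣ mid.sum := by
    have h' : (l.take i).sum ≡ (l.take i).sum + mid.sum [MOD b] := by
      unfold Nat.ModEq
      rw [hsum]
      exact heq
    have := (Nat.modEq_iff_dvd' (Nat.le_add_right _ _)).1 h'
    simpa using this
  have hmidpos : 1 ≤ mid.length := by omega
  have hmidsum_pos : 1 ≤ mid.sum :=
    le_trans hmidpos (length_le_sum (fun x hx => h1 x (hmemmid x hx)))
  obtain ⟨t, ht⟩ := hdvd
  have ht1 : 1 ≤ t := by
    rcases Nat.eq_zero_or_pos t with h | h
    · rw [h, Nat.mul_zero] at ht; omega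
    · exact h
  have hupper : mid.sum ≤ mid.length * (b - 1) := by
    calc mid.sum ≤ mid.length • (b - 1) :=
          List.sum_le_card_nsmul _ _ (fun x hx => h2 x (hmemmid x hx))
    _ = mid.length * (b - 1) := by simp
  have htlt : t + 1 ≤ mid.length := by
    rcases Nat.lt_or_ge t mid.length with h | h
    · omega
    · exfalso
      have h3 : mid.sum ≤ t * (b - 1) :=
        le_trans hupper (Nat.mul_le_mul_right _ h)
      rw [ht] at h3
      zify [hb] at h3
      have ht1' : (1:ℤ) ≤ (t:ℤ) := by exact_mod_cast ht1
      nlinarith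
  refine ⟨l.take i ++ l.drop j ++ List.replicate t b, ?_, ?_, ?_⟩
  · rw [List.length_append, List.length_append, List.length_take, List.length_replicate,
      List.length_drop]
    omega
  · have hlsum : l.sum = (l.take j).sum + (l.drop j).sum := by
      rw [← List.sum_append, List.take_append_drop]
    rw [List.sum_append, List.sum_append, List.sum_replicate, smul_eq_mul]
    have hc : t * b = b * t := Nat.mul_comm t b
    linarith [hsum, ht, hlsum]
  · intro x hx
    rcases List.mem_append.1 hx with hx | hx
    · rcases List.mem_append.1 hx with hx | hx
      · exact Or.inl (List.mem_of_mem_take hx)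
      · exact Or.inl (List.mem_of_mem_drop hx)
    · exact Or.inr (List.eq_of_mem_replicate hx)

lemma zero_notMem_minrep (B : Finset ℕ) (lx : List ℕ) (X : ℕ)
    (hmem : ∀ x ∈ lx, x ∈ B) (hsum : lx.sum = X)
    (hmin : ∀ s, X ∈ iterFin B s → lx.length ≤ s) : (0 : ℕ) ∉ lx := by
  intro h0
  have hperm : List.Perm lx (0 :: lx.erase 0) := List.perm_cons_erase h0
  have hs := hperm.sum_eq
  have hl := hperm.length_eq
  simp only [List.sum_cons, List.length_cons, Nat.zero_add] at hs hl
  have hX : X ∈ iterFin B (lx.length - 1) := (mem_iterFin_iff _ _ _).2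
    ⟨lx.erase 0, by omega, fun x hx => hmem x (List.mem_of_mem_erase hx), by omega⟩
  have hge := hmin _ hX
  have hpos : 1 ≤ lx.length := List.length_pos_iff.2 (List.ne_nil_of_mem h0)
  omega

lemma drop_lemma (B : Finset ℕ) (b : ℕ) (hb : 1 ≤ b) (hbB : b ∈ B)
    (hub : ∀ x ∈ B, x ≤ b) (M r r' : ℕ)
    (hMr : M ∈ iterFin B r) (hminr : ∀ s, M ∈ iterFin B s → r ≤ s)
    (hM'r' : M + b ∈ iterFin B r') (hminr' : ∀ s, M + b ∈ iterFin B s → r' ≤ s)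
    (hdrop : r' ≤ r) : (r : ℤ) ≤ 2 * (b : ℤ) - 4 := by
  obtain ⟨l', hl1, hl2, hl3⟩ := (mem_iterFin_iff B r' (M + b)).1 hM'r'
  have h0l' : (0:ℕ) ∉ l' := zero_notMem_minrep B l' (M+b) hl2 hl3
    (fun s hs => hl1 ▸ hminr' s hs)
  have hbl' : b ∉ l' := by
    intro hmem
    have hperm : List.Perm l' (b :: l'.erase b) := List.perm_cons_erase hmem
    have hs := hperm.sum_eq
    have hl := hperm.length_eq
    simp only [List.sum_cons, List.length_cons] at hs hl
    have hM' : M ∈ iterFin B (r' - 1) := (mem_iterFin_iff _ _ _).2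
      ⟨l'.erase b, by omega, fun x hx => hl2 x (List.mem_of_mem_erase hx), by omega⟩
    have h1 := hminr _ hM'
    have hpos : 1 ≤ r' := by rw [← hl1]; exact List.length_pos_iff.2 (List.ne_nil_of_mem hmem)
    omega
  have hparts1 : ∀ x ∈ l', 1 ≤ x := by
    intro x hx
    rcases Nat.eq_zero_or_pos x with h | h
    · exact absurd (h ▸ hx) h0l'
    · exact h
  have hpartsb : ∀ x ∈ l', x ≤ b - 1 := by
    intro x hx
    have h1 := hub x (hl2 x hx)
    have h2 : x ≠ b := fun h => hbl' (h ▸ hx)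
    omega
  have hr'lt : r' ≤ b - 1 := by
    by_contra hcon
    push_neg at hcon
    have hble : b ≤ l'.length := by omega
    obtain ⟨l'', hlen'', hsum'', hmem''⟩ := core_swap hb l' hparts1 hpartsb hble
    have hnew : M + b ∈ iterFin B l''.length := (mem_iterFin_iff _ _ _).2
      ⟨l'', rfl, fun x hx => by
        rcases hmem'' x hx with h | h
        · exact hl2 x h
        · exact h ▸ hbB, by omega⟩
    have := hminr' _ hnew
    omega
  have hMble : M + b ≤ (b - 1) * (b - 1) := by
    have h1 : l'.sum ≤ l'.length • (b - 1) := List.sum_le_card_nsmul _ _ hpartsb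
    simp only [smul_eq_mul] at h1
    calc M + b = l'.sum := hl3.symm
    _ ≤ l'.length * (b - 1) := h1
    _ ≤ (b - 1) * (b - 1) := Nat.mul_le_mul_right _ (by omega)
  obtain ⟨l, kl1, kl2, kl3⟩ := (mem_iterFin_iff B r M).1 hMr
  have h0l : (0:ℕ) ∉ l := zero_notMem_minrep B l M kl2 kl3 (fun s hs => kl1 ▸ hminr s hs)
  have hparts1l : ∀ x ∈ l, 1 ≤ x := by
    intro x hx
    rcases Nat.eq_zero_or_pos x with h | h
    · exact absurd (h ▸ hx) h0l
    · exact h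
  set ls := l.filter (fun x => decide (x < b)) with hls
  set lb := l.filter (fun x => !decide (x < b)) with hlb
  have hperm : List.Perm (ls ++ lb) l := List.filter_append_perm (fun x => decide (x < b)) l
  have hpermsum := hperm.sum_eq
  have hpermlen := hperm.length_eq
  rw [List.sum_append] at hpermsum
  rw [List.length_append] at hpermlen
  have hlslen : ls.length ≤ b - 1 := by
    by_contra hcon
    push_neg at hcon
    have hble : b ≤ ls.length := by omega
    have hmemls : ∀ x ∈ ls, x ∈ l := fun x hx => List.mem_of_mem_filter hx
    have hps : ∀ x ∈ ls, 1 ≤ x := fun x hx => hparts1l x (hmemls x hx)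
    have hps2 : ∀ x ∈ ls, x ≤ b - 1 := by
      intro x hx
      have := List.of_mem_filter hx
      simp at this
      omega
    obtain ⟨ls'', l1, l2, l3⟩ := core_swap hb ls hps hps2 hble
    have hnew : M ∈ iterFin B (ls'' ++ lb).length := (mem_iterFin_iff _ _ _).2
      ⟨ls'' ++ lb, rfl, fun x hx => by
        rcases List.mem_append.1 hx with h | h
        · rcases l3 x h with h' | h'
          · exact kl2 x (hmemls x h')
          · exact h' ▸ hbB
        · exact kl2 x (List.mem_of_mem_filter h), by
        rw [List.sum_append, l2]
        omega⟩
    have := hminr _ hnew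
    rw [List.length_append] at this
    omega
  have hlbeq : ∀ x ∈ lb, x = b := by
    intro x hx
    have h1 := List.of_mem_filter hx
    simp at h1
    have h2 := hub x (kl2 x (List.mem_of_mem_filter hx))
    omega
  have hlbsum : lb.sum = lb.length * b := by
    rw [List.sum_eq_card_nsmul lb b hlbeq, smul_eq_mul]
  have hlbM : lb.length * b ≤ M := by
    rw [← hlbsum]
    omega
  -- final arithmetic over ℤ
  have c1 : (lb.length : ℤ) * (b : ℤ) ≤ (M : ℤ) := by exact_mod_cast hlbM
  have c2 : (M : ℤ) + b ≤ ((b:ℤ) - 1) * ((b:ℤ) - 1) := by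
    have := hMble
    zify [hb] at this
    linarith
  have c3 : (ls.length : ℤ) ≤ (b:ℤ) - 1 := by
    zify [hb] at hlslen
    linarith
  have c4 : (ls.length : ℤ) + (lb.length : ℤ) = (r : ℤ) := by
    have : ls.length + lb.length = r := by omega
    exact_mod_cast this
  have hbz : (1:ℤ) ≤ (b:ℤ) := by exact_mod_cast hb
  have hM0 : (0:ℤ) ≤ (M:ℤ) := by positivity
  have clb : (lb.length : ℤ) ≤ (b:ℤ) - 3 := by
    by_contra hcc
    push_neg at hcc
    have h5 : (b:ℤ) - 2 ≤ (lb.length:ℤ) := by linarith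
    have h6 : ((b:ℤ) - 2) * b ≤ (lb.length:ℤ) * b :=
      mul_le_mul_of_nonneg_right h5 (by linarith)
    nlinarith
  linarith

theorem extraneous_set_height_bound (A : Finset ℕ) (h0 : 0 ∈ A)
    (hgcd : A.gcd id = 1) (b : ℕ) (hb : IsGreatest (A : Set ℕ) b) (hb1 : 1 ≤ b)
    (a : ℕ) (ha : a < b) (g k : ℕ)
    (hvg : resClass A b a ⊆ (fun r => (g, k) + r) '' lambdaPlus b ∧
      (((fun r => (g, k) + r) '' lambdaPlus b) \ resClass A b a).Finite) :
    ∀ p ∈ ((fun r => (g, k) + r) '' lambdaPlus b) \ resClass A b a,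
      (p.2 : ℤ) ≤ 2 * (b : ℤ) - 5 := by
  obtain ⟨hvg1, hvg2⟩ := hvg
  intro p hp
  by_contra hcon
  push_neg at hcon
  obtain ⟨hpim, hpnot⟩ := hp
  obtain ⟨q, hq, hpq⟩ := hpim
  obtain ⟨m₀, n₀, rfl⟩ := hq
  have hbA : b ∈ A := hb.1
  have hub : ∀ x ∈ A, x ≤ b := fun x hx => hb.2 hx
  have hp1 : p.1 = g + b * n₀ := by rw [← hpq]; rfl
  have hp2 : p.2 = k + (m₀ + n₀) := by rw [← hpq]; rfl
  -- image membership helper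
  have himg : ∀ m n : ℕ,
      (g + b * n, k + (m + n)) ∈ (fun r => ((g, k) : ℕ × ℕ) + r) '' lambdaPlus b := by
    intro m n
    exact ⟨(b * n, m + n), ⟨m, n, rfl⟩, rfl⟩
  -- finiteness helper
  have hexists : ∀ f : ℕ → ℕ × ℕ, Function.Injective f →
      (∀ i, f i ∈ (fun r => ((g, k) : ℕ × ℕ) + r) '' lambdaPlus b) →
      ∃ i, f i ∈ resClass A b a := by
    intro f hinj hmem
    by_contra hcon'
    push_neg at hcon'
    exact hvg2.not_infinite (Set.infinite_of_injective_forall_mem hinj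
      (fun i => ⟨hmem i, hcon' i⟩))
  -- step 1: residue of g, and g ≤ k*b
  obtain ⟨i₁, hi₁⟩ := hexists (fun i => (g + b * i, k + (0 + i)))
    (fun x y hxy => by
      have := congrArg Prod.snd hxy
      simpa using this)
    (fun i => himg 0 i)
  obtain ⟨hc₁, hr₁⟩ := hi₁
  have hga : g % b = a := by
    have hh : (g + b * i₁) % b = a := hr₁
    rwa [Nat.add_mul_mod_self_left] at hh
  have hgkb : g ≤ k * b := by
    have h1 : g + b * i₁ ≤ (k + (0 + i₁)) * b := le_of_mem_iterFin hub hc₁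
    have h2 : (k + (0 + i₁)) * b = k * b + b * i₁ := by ring
    rw [h2] at h1
    omega
  -- the extraneous point
  have hNnot : g + b * n₀ ∉ iterFin A (k + (m₀ + n₀)) := by
    intro hmem
    refine hpnot ⟨?_, ?_⟩
    · show p.1 ∈ iterFin A p.2
      rw [hp1, hp2]; exact hmem
    · rw [hp1, Nat.add_mul_mod_self_left]; exact hga
  have hconh : 2 * (b : ℤ) - 5 < ((k + (m₀ + n₀) : ℕ) : ℤ) := by
    rw [← hp2]; exact_mod_cast hcon
  have hNle : g + b * n₀ ≤ (k + (m₀ + n₀)) * b := by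
    have e1 : (k + (m₀ + n₀)) * b = k * b + m₀ * b + b * n₀ := by ring
    rw [e1]
    omega
  -- the column is eventually in S_a
  obtain ⟨i₂, hi₂⟩ := hexists (fun i => (g + b * n₀, k + ((m₀ + i) + n₀)))
    (fun x y hxy => by
      have := congrArg Prod.snd hxy
      simpa using this)
    (fun i => himg (m₀ + i) n₀)
  have hEx : ∃ H, g + b * n₀ ∈ iterFin A H := ⟨k + ((m₀ + i₂) + n₀), hi₂.1⟩
  set R := Nat.find hEx with hRdef
  have hRmem : g + b * n₀ ∈ iterFin A R := Nat.find_spec hEx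
  have hRmin : ∀ s, g + b * n₀ ∈ iterFin A s → R ≤ s := fun s hs => Nat.find_min' hEx hs
  have hhR : k + (m₀ + n₀) < R := by
    by_contra hc'
    push_neg at hc'
    exact hNnot (iterFin_mono A h0 hc' hRmem)
  set R' := R - 1 with hR'def
  have hR1 : R = R' + 1 := by omega
  set B := A.image (fun x => b - x) with hBdef
  have h0B : (0 : ℕ) ∈ B := Finset.mem_image.2 ⟨b, hbA, by omega⟩
  have hbB : b ∈ B := Finset.mem_image.2 ⟨0, h0, by omega⟩
  have hNR' : g + b * n₀ ≤ R' * b := by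
    refine le_trans hNle (Nat.mul_le_mul_right b ?_)
    omega
  set M := R' * b - (g + b * n₀) with hMdef
  have hMb : M + b = (R' + 1) * b - (g + b * n₀) := by
    have e : (R' + 1) * b = R' * b + b := by ring
    rw [hMdef, e, Nat.sub_add_comm hNR']
  have hMbmem : M + b ∈ iterFin B (R' + 1) := by
    rw [hMb]
    rw [hR1] at hRmem
    exact reflect_mem hub hRmem
  have hMnot : M ∉ iterFin B R' := by
    intro hmem
    have hNR'' : g + b * n₀ ∈ iterFin A R' := (reflect_iff A hub hNR').2 hmem
    have := hRmin _ hNR''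
    omega
  by_cases hc : ∃ s, M ∈ iterFin B s
  · obtain ⟨r, hr, hrmin⟩ : ∃ r, M ∈ iterFin B r ∧ ∀ s, M ∈ iterFin B s → r ≤ s :=
      ⟨Nat.find hc, Nat.find_spec hc, fun s hs => Nat.find_min' hc hs⟩
    have hc' : ∃ s, M + b ∈ iterFin B s := ⟨R' + 1, hMbmem⟩
    obtain ⟨r', hr', hrmin'⟩ : ∃ r', M + b ∈ iterFin B r' ∧
        ∀ s, M + b ∈ iterFin B s → r' ≤ s :=
      ⟨Nat.find hc', Nat.find_spec hc', fun s hs => Nat.find_min' hc' hs⟩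
    have hrR : R' + 1 ≤ r := by
      by_contra hcc
      push_neg at hcc
      exact hMnot (iterFin_mono B h0B (by omega) hr)
    have hdrop : r' ≤ r := le_trans (hrmin' _ hMbmem) hrR
    have hubB : ∀ x ∈ B, x ≤ b := by
      intro x hx
      obtain ⟨y, hy, rfl⟩ := Finset.mem_image.1 hx
      omega
    have hfinal := drop_lemma B b hb1 hbB hubB M r r' hr hrmin hr' hrmin' hdrop
    have hrge : k + (m₀ + n₀) + 2 ≤ r := by omega
    have : ((k + (m₀ + n₀) : ℕ) : ℤ) + 2 ≤ (r : ℤ) := by exact_mod_cast hrge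
    linarith
  · push_neg at hc
    have hm₁ : k + n₀ ≤ R' := by omega
    obtain ⟨i₃, hi₃⟩ := hexists
      (fun s => (g + b * (n₀ + s), k + ((R' - k - n₀) + (n₀ + s))))
      (fun x y hxy => by
        have := congrArg Prod.snd hxy
        simpa using this)
      (fun s => himg (R' - k - n₀) (n₀ + s))
    obtain ⟨hc₃, -⟩ := hi₃
    have hcone : g + b * (n₀ + i₃) ∈ iterFin A (R' + i₃) := by
      have e : k + ((R' - k - n₀) + (n₀ + i₃)) = R' + i₃ := by omega
      have := hc₃
      show (g + b * (n₀ + i₃)) ∈ iterFin A (R' + i₃)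
      rwa [e] at this
    have hrefl := reflect_mem hub hcone
    have e2 : (R' + i₃) * b - (g + b * (n₀ + i₃)) = M := by
      have e3 : (R' + i₃) * b = R' * b + b * i₃ := by ring
      have e4 : g + b * (n₀ + i₃) = (g + b * n₀) + b * i₃ := by ring
      rw [e3, e4, Nat.add_sub_add_right, hMdef]
    rw [e2] at hrefl
    exact hc _ hrefl
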